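/- arXiv:2202.10822 — 4 statements merged into one kernel-verified Lean document; each statement's English description precedes it below -/
import Mathlib

section
/- Let K be a convex body in n-dimensional Euclidean space and suppose K + v₁, …, K + v_k are translates of K whose interiors are pairwise disjoint and which each have a common point with K but interiors disjoint from the interior of K. Then k ≤ 3^n − 1. -/
open Pointwise MeasureTheory Set ENNReal

/-- A convex set with nonempty interior is contained in the closure of its interior. -/
lemma hadwiger_aux_subset_closure_interior {E : Type*} [AddCommGroup E] [Module ℝ E]
    [TopologicalSpace E] [IsTopologicalAddGroup E] [ContinuousSMul ℝ E]
    {s : Set E} (hs : Convex ℝ s) (hne : (interior s).Nonempty) :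
    s ⊆ closure (interior s) := by
  obtain ⟨y, hy⟩ := hne
  intro x hx
  have hseq : ∀ m : ℕ, x + (1 / (m + 1) : ℝ) • (y - x) ∈ interior s := fun m =>
    hs.add_smul_sub_mem_interior hx hy ⟨by positivity, by
      rw [div_le_one (by positivity)]; linarith⟩
  have htend : Filter.Tendsto (fun m : ℕ => x + (1 / (m + 1) : ℝ) • (y - x))
      Filter.atTop (nhds x) := by
    have h0 : Filter.Tendsto (fun m : ℕ => (1 / (m + 1) : ℝ)) Filter.atTop (nhds 0) :=
      tendsto_one_div_add_atTop_nhds_zero_nat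
    have := (h0.smul_const (y - x)).const_add x
    simpa using this
  exact mem_closure_of_tendsto htend (Filter.Eventually.of_forall fun m => hseq m)

/-- **Hadwiger's theorem.** If `k` translates of an `n`-dimensional convex body `K`
have pairwise disjoint interiors and each touches `K` (has a common point with `K`
but interior disjoint from the interior of `K`), then `k ≤ 3^n - 1`. -/
theorem hadwiger_kissing_bound (n k : ℕ)
    (K : Set (EuclideanSpace ℝ (Fin n)))
    (hKcomp : IsCompact K) (hKconv : Convex ℝ K) (hKint : (interior K).Nonempty)
    (v : Fin k → EuclideanSpace ℝ (Fin n))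
    (hpair : ∀ i j : Fin k, i ≠ j →
      Disjoint (interior (v i +ᵥ K)) (interior (v j +ᵥ K)))
    (htouch : ∀ i : Fin k, ((v i +ᵥ K) ∩ K).Nonempty)
    (hnonoverlap : ∀ i : Fin k, Disjoint (interior (v i +ᵥ K)) (interior K)) :
    k ≤ 3 ^ n - 1 := by
  classical
  set B : Set (EuclideanSpace ℝ (Fin n)) := interior K with hBdef
  set S : Set (EuclideanSpace ℝ (Fin n)) := B - B with hSdef
  set D : Set (EuclideanSpace ℝ (Fin n)) := K - K with hDdef
  have hBopen : IsOpen B := isOpen_interior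
  have hBconv : Convex ℝ B := hKconv.interior
  have hBne : B.Nonempty := hKint
  have hSconv : Convex ℝ S := hBconv.sub hBconv
  have hSopen : IsOpen S := by rw [hSdef, sub_eq_add_neg]; exact hBopen.add_right
  have hSne : S.Nonempty := by
    obtain ⟨b, hb⟩ := hBne
    exact ⟨b - b, Set.sub_mem_sub hb hb⟩
  have hSsubD : S ⊆ D := by
    rintro x ⟨a, ha, b, hb, rfl⟩
    exact Set.sub_mem_sub (interior_subset ha) (interior_subset hb)
  have hDcomp : IsCompact D := by rw [hDdef, sub_eq_add_neg]; exact hKcomp.add hKcomp.neg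
  -- the key reduction: each `v i ∈ D`, and the relevant differences avoid `S`
  have hmemD : ∀ i, v i ∈ D := by
    intro i
    obtain ⟨x, ⟨a, ha, rfl⟩, hxK⟩ := htouch i
    simp only [vadd_eq_add] at hxK ⊢
    have : v i = (v i + a) - a := by module
    rw [this]
    exact Set.sub_mem_sub hxK ha
  have hnotS : ∀ i, v i ∉ S := by
    intro i hvi
    obtain ⟨b1, hb1, b2, hb2, hv⟩ := hvi
    simp only at hv
    have h1 : v i + b2 ∈ interior (v i +ᵥ K) := by
      rw [interior_vadd]
      exact ⟨b2, hb2, rfl⟩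
    have h2 : v i + b2 ∈ interior K := by
      have : v i + b2 = b1 := by rw [← hv]; module
      rw [this]; exact hb1
    exact (hnonoverlap i).ne_of_mem h1 h2 rfl
  have hdiffS : ∀ i j, i ≠ j → v i - v j ∉ S := by
    intro i j hij hmem
    obtain ⟨b1, hb1, b2, hb2, hv⟩ := hmem
    simp only at hv
    have h1 : v i + b2 ∈ interior (v i +ᵥ K) := by
      rw [interior_vadd]; exact ⟨b2, hb2, rfl⟩
    have h2 : v i + b2 ∈ interior (v j +ᵥ K) := by
      rw [interior_vadd]
      refine ⟨b1, hb1, ?_⟩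
      simp only [vadd_eq_add]
      rw [add_comm]
      exact sub_eq_sub_iff_add_eq_add.mp hv
    exact (hpair i j hij).ne_of_mem h1 h2 rfl
  -- combined family of k+1 centers
  set w : Fin (k + 1) → EuclideanSpace ℝ (Fin n) := Fin.cases 0 v with hwdef
  have hw0 : w 0 = 0 := rfl
  have hws : ∀ i : Fin k, w i.succ = v i := fun i => rfl
  have hwD : ∀ i, w i ∈ D := by
    intro i
    rcases Fin.eq_zero_or_eq_succ i with rfl | ⟨i', rfl⟩
    · obtain ⟨a, ha⟩ := hKint
      exact ⟨a, interior_subset ha, a, interior_subset ha, by simp [hw0]⟩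
    · rw [hws]; exact hmemD i'
  have hSsymm : ∀ x ∈ S, -x ∈ S := by
    rintro x ⟨b1, hb1, b2, hb2, rfl⟩
    exact ⟨b2, hb2, b1, hb1, by simp only; abel⟩
  have hwS : ∀ i j : Fin (k + 1), i ≠ j → w i - w j ∉ S := by
    intro i j hij
    rcases Fin.eq_zero_or_eq_succ i with rfl | ⟨i', rfl⟩ <;>
      rcases Fin.eq_zero_or_eq_succ j with rfl | ⟨j', rfl⟩
    · exact absurd rfl hij
    · intro hmem
      refine hnotS j' ?_
      have := hSsymm _ hmem
      rw [hw0, hws] at this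
      simpa using this
    · intro hmem
      rw [hw0, hws] at hmem
      exact hnotS i' (by simpa using hmem)
    · intro hmem
      rw [hws, hws] at hmem
      exact hdiffS i' j' (fun h => hij (by rw [h])) hmem
  -- the packing argument
  set U : Fin (k + 1) → Set (EuclideanSpace ℝ (Fin n)) :=
    fun i => w i +ᵥ (2⁻¹ : ℝ) • S with hUdef
  have hUopen : ∀ i, IsOpen (U i) := fun i => (hSopen.smul₀ (by norm_num)).vadd (w i)
  have hhalf : ∀ s1 ∈ S, ∀ s2 ∈ S, (2⁻¹ : ℝ) • s1 - (2⁻¹ : ℝ) • s2 ∈ S := by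
    rintro _ ⟨b1, hb1, b2, hb2, rfl⟩ _ ⟨b3, hb3, b4, hb4, rfl⟩
    refine ⟨(2⁻¹ : ℝ) • b1 + (2⁻¹ : ℝ) • b4,
      hBconv hb1 hb4 (by norm_num) (by norm_num) (by norm_num),
      (2⁻¹ : ℝ) • b2 + (2⁻¹ : ℝ) • b3,
      hBconv hb2 hb3 (by norm_num) (by norm_num) (by norm_num), ?_⟩
    simp only
    module
  have hUdisj : Pairwise (Function.onFun Disjoint U) := by
    intro i j hij
    refine Set.disjoint_left.mpr ?_
    rintro x ⟨_, ⟨s1, hs1, rfl⟩, rfl⟩ ⟨_, ⟨s2, hs2, rfl⟩, hx⟩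
    simp only [vadd_eq_add] at hx
    have heq : w i - w j = (2⁻¹ : ℝ) • s2 - (2⁻¹ : ℝ) • s1 := by
      rw [sub_eq_sub_iff_add_eq_add, ← hx]
      abel
    exact hwS i j hij (heq ▸ hhalf s2 hs2 s1 hs1)
  have hUsub : ∀ i, U i ⊆ (3 / 2 : ℝ) • D := by
    intro i
    rintro _ ⟨_, ⟨s, hsmem, rfl⟩, rfl⟩
    obtain ⟨b1, hb1, b2, hb2, rfl⟩ := hsmem
    obtain ⟨a, ha, a', ha', hw⟩ := hwD i
    simp only at hw
    refine ⟨((2/3 : ℝ) • a + (1/3 : ℝ) • b1) - ((2/3 : ℝ) • a' + (1/3 : ℝ) • b2),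
      Set.sub_mem_sub
        (hKconv ha (interior_subset hb1) (by norm_num) (by norm_num) (by norm_num))
        (hKconv ha' (interior_subset hb2) (by norm_num) (by norm_num) (by norm_num)), ?_⟩
    simp only [vadd_eq_add]
    rw [← hw]
    module
  -- measures
  have hμUi : ∀ i, volume (U i) = ENNReal.ofReal ((2⁻¹ : ℝ) ^ n) * volume S := by
    intro i
    rw [hUdef]
    simp only
    rw [measure_vadd (μ := volume), Measure.addHaar_smul_of_nonneg volume (by norm_num) S,
      finrank_euclideanSpace_fin]
  have hμbig : volume ((3 / 2 : ℝ) • D) = ENNReal.ofReal ((3 / 2 : ℝ) ^ n) * volume D := by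
    rw [Measure.addHaar_smul_of_nonneg volume (by norm_num) D, finrank_euclideanSpace_fin]
  have hμSD : volume S = volume D := by
    refine le_antisymm (measure_mono hSsubD) ?_
    have hKclB : K ⊆ closure B := hadwiger_aux_subset_closure_interior hKconv hKint
    have hDclS : D ⊆ closure S := by
      rintro _ ⟨a, ha, b, hb, rfl⟩
      exact map_mem_closure₂ continuous_sub (hKclB ha) (hKclB hb)
        (fun x hx y hy => Set.sub_mem_sub hx hy)
    have hfr : volume (frontier S) = 0 := hSconv.addHaar_frontier volume
    have hclS : volume (closure S) ≤ volume S :=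
      calc volume (closure S) ≤ volume S + volume (frontier S) := by
            rw [closure_eq_self_union_frontier S]; exact measure_union_le _ _
        _ = volume S := by rw [hfr, add_zero]
    exact le_trans (measure_mono hDclS) hclS
  have hSpos : 0 < volume S := hSopen.measure_pos volume hSne
  have hSfin : volume S < ⊤ := hμSD ▸ hDcomp.measure_lt_top
  -- sum the measures
  have hsum : ∑ i : Fin (k + 1), volume (U i) ≤ volume ((3 / 2 : ℝ) • D) := by
    have hU := measure_iUnion (μ := volume) hUdisj (fun i => (hUopen i).measurableSet)
    rw [tsum_fintype] at hU
    rw [← hU]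
    exact measure_mono (Set.iUnion_subset hUsub)
  rw [hμbig, ← hμSD] at hsum
  have hsum' : ((k : ℝ≥0∞) + 1) * (ENNReal.ofReal ((2⁻¹ : ℝ) ^ n) * volume S)
      ≤ ENNReal.ofReal ((3 / 2 : ℝ) ^ n) * volume S := by
    calc ((k : ℝ≥0∞) + 1) * (ENNReal.ofReal ((2⁻¹ : ℝ) ^ n) * volume S)
        = ∑ x : Fin (k + 1), ENNReal.ofReal ((2⁻¹ : ℝ) ^ n) * volume S := by
          rw [Finset.sum_const, Finset.card_univ, Fintype.card_fin, nsmul_eq_mul]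
          push_cast
          ring
      _ = ∑ i : Fin (k + 1), volume (U i) :=
          Finset.sum_congr rfl fun i _ => (hμUi i).symm
      _ ≤ _ := hsum
  -- cancel volume S and the factor (1/2)^n
  have hkey : ((k : ℝ≥0∞) + 1) * ENNReal.ofReal ((2⁻¹ : ℝ) ^ n)
      ≤ ENNReal.ofReal ((3 / 2 : ℝ) ^ n) := by
    rw [← ENNReal.mul_le_mul_iff_left hSpos.ne' hSfin.ne, mul_assoc]
    exact hsum'
  have h32 : ENNReal.ofReal ((3 / 2 : ℝ) ^ n)
      = ((3 : ℝ≥0∞) ^ n) * ENNReal.ofReal ((2⁻¹ : ℝ) ^ n) := by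
    rw [show ((3 : ℝ≥0∞) ^ n) = ENNReal.ofReal ((3 : ℝ) ^ n) by
        rw [ENNReal.ofReal_pow (by norm_num), ENNReal.ofReal_ofNat],
      ← ENNReal.ofReal_mul (by positivity)]
    congr 1
    rw [div_pow, inv_pow]
    field_simp
  have hhalfpos : ENNReal.ofReal ((2⁻¹ : ℝ) ^ n) ≠ 0 := by
    rw [← ENNReal.ofReal_zero, Ne, ENNReal.ofReal_eq_ofReal_iff (by positivity) le_rfl]
    positivity
  have hfinal : ((k : ℝ≥0∞) + 1) ≤ (3 : ℝ≥0∞) ^ n := by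
    rw [h32] at hkey
    exact (ENNReal.mul_le_mul_iff_left hhalfpos ENNReal.ofReal_ne_top).mp hkey
  have hnat : k + 1 ≤ 3 ^ n := by
    rw [show ((3 : ℝ≥0∞) ^ n) = ((3 ^ n : ℕ) : ℝ≥0∞) by push_cast; ring,
      show ((k : ℝ≥0∞) + 1) = ((k + 1 : ℕ) : ℝ≥0∞) by push_cast; ring,
      Nat.cast_le] at hfinal
    exact hfinal
  omega
end

section
/- Let O = {x ∈ ℝ³ : |x₁| + |x₂| + |x₃| ≤ 1} be the regular octahedron. The maximum number k for which there exist translates O + v₁, …, O + v_k with pairwise disjoint interiors, each having a common point with O but interior disjoint from the interior of O, is exactly 18. -/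
open Pointwise

section Core

lemma same_sign_abs_sub (p p' : ℝ) (h : 0 ≤ p ↔ 0 ≤ p') : |p - p'| = abs (|p| - |p'|) := by
  rcases le_or_gt 0 p with hp | hp
  · rw [abs_of_nonneg hp, abs_of_nonneg (h.mp hp)]
  · have hp' : p' < 0 := by by_contra hc; push_neg at hc; exact absurd (h.mpr hc) (not_le.mpr hp)
    rw [abs_of_neg hp, abs_of_neg hp', ← abs_neg]; ring_nf

lemma vertex_core (a b c a' b' c' : ℝ) (hn : |a| + |b| + |c| = 2) (hn' : |a'| + |b'| + |c'| = 2)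
    (h1 : 1 < |a|) (h1' : 1 < |a'|) (hs : 0 ≤ a ↔ 0 ≤ a') :
    |a - a'| + |b - b'| + |c - c'| < 2 := by
  have e1 := same_sign_abs_sub a a' hs
  have h2 : |b - b'| ≤ |b| + |b'| := abs_sub b b'
  have h3 : |c - c'| ≤ |c| + |c'| := abs_sub c c'
  have h4 := abs_nonneg b; have h5 := abs_nonneg c
  have h6 := abs_nonneg b'; have h7 := abs_nonneg c'
  rcases abs_cases (|a| - |a'|) with ⟨h8, _⟩ | ⟨h8, _⟩ <;> rw [e1, h8] <;> linarith

lemma mid_core (p q r p' q' r' : ℝ)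
    (hp1 : |p| ≤ 1) (hq1 : |q| ≤ 1) (hrp : |r| ≤ |p|) (hrq : |r| ≤ |q|)
    (hs : |p| + |q| + |r| = 2)
    (hp1' : |p'| ≤ 1) (hq1' : |q'| ≤ 1) (hrp' : |r'| ≤ |p'|) (hrq' : |r'| ≤ |q'|)
    (hs' : |p'| + |q'| + |r'| = 2)
    (hsp : 0 ≤ p ↔ 0 ≤ p') (hsq : 0 ≤ q ↔ 0 ≤ q')
    (htx : ¬(|r| = |q| ∧ |q| < |p|)) (hty : ¬(|r'| = |q'| ∧ |q'| < |p'|)) :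
    |p - p'| + |q - q'| + |r - r'| < 2 := by
  rw [same_sign_abs_sub p p' hsp, same_sign_abs_sub q q' hsq]
  by_contra hcon
  push_neg at hcon
  rcases abs_cases (|p| - |p'|) with ⟨e1, f1⟩ | ⟨e1, f1⟩ <;>
  rcases abs_cases (|q| - |q'|) with ⟨e2, f2⟩ | ⟨e2, f2⟩ <;>
  rcases abs_cases (r - r') with ⟨e3, f3⟩ | ⟨e3, f3⟩ <;>
  rcases abs_cases r with ⟨e4, f4⟩ | ⟨e4, f4⟩ <;>
  rcases abs_cases r' with ⟨e5, f5⟩ | ⟨e5, f5⟩ <;>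
  rw [e1, e2, e3] at hcon <;> rw [e4] at hs hrp hrq htx <;> rw [e5] at hs' hrp' hrq' hty <;>
  first
  | linarith
  | exact htx ⟨by linarith, by linarith⟩
  | exact hty ⟨by linarith, by linarith⟩

open Classical in
noncomputable def R3 (a b c : ℝ) : Fin 3 :=
  if |a| < |b| ∧ |a| < |c| then 0
  else if |b| < |a| ∧ |b| < |c| then 1
  else if |c| < |a| ∧ |c| < |b| then 2
  else if |a| = |b| ∧ |a| ≤ |c| then 0
  else if |b| = |c| ∧ |b| ≤ |a| then 1
  else 2

lemma R3_spec0 (a b c : ℝ) (h : R3 a b c = 0) :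
    |a| ≤ |b| ∧ |a| ≤ |c| ∧ ¬(|a| = |c| ∧ |c| < |b|) := by
  unfold R3 at h
  split_ifs at h with h1 h2 h3 h4 h5 <;>
    [skip; simp_all; simp_all; skip; simp_all; simp_all]
  · exact ⟨le_of_lt h1.1, le_of_lt h1.2, by rintro ⟨e, l⟩; linarith [h1.2]⟩
  · exact ⟨le_of_eq h4.1, h4.2, by rintro ⟨e, l⟩; rw [← h4.1] at l; linarith [h4.2, e ▸ l]⟩

lemma R3_spec1 (a b c : ℝ) (h : R3 a b c = 1) :
    |b| ≤ |a| ∧ |b| ≤ |c| ∧ ¬(|b| = |a| ∧ |a| < |c|) := by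
  unfold R3 at h
  split_ifs at h with h1 h2 h3 h4 h5 <;>
    [simp_all; skip; simp_all; simp_all; skip; simp_all]
  · exact ⟨le_of_lt h2.1, le_of_lt h2.2, by rintro ⟨e, l⟩; linarith [h2.1]⟩
  · exact ⟨h5.2, le_of_eq h5.1, by rintro ⟨e, l⟩; rw [h5.1] at e; linarith⟩

lemma R3_spec2 (a b c : ℝ) (h : R3 a b c = 2) :
    |c| ≤ |a| ∧ |c| ≤ |b| ∧ ¬(|c| = |b| ∧ |b| < |a|) := by
  unfold R3 at h
  split_ifs at h with h1 h2 h3 h4 h5 <;>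
    [simp_all; simp_all; skip; simp_all; simp_all; skip]
  · exact ⟨le_of_lt h3.1, le_of_lt h3.2, by rintro ⟨e, l⟩; linarith [h3.2]⟩
  · push_neg at h1 h2 h3 h4 h5
    have hca : |c| ≤ |a| := by
      by_contra hc; push_neg at hc
      rcases lt_trichotomy |a| |b| with t | t | t
      · linarith [h1 t]
      · linarith [h4 t]
      · linarith [h2 t]
    have hcb : |c| ≤ |b| := by
      by_contra hc; push_neg at hc
      rcases lt_trichotomy |a| |b| with t | t | t
      · linarith [h1 t]
      · linarith [h4 t]
      · linarith [h2 t]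
    exact ⟨hca, hcb, by rintro ⟨e, l⟩; linarith [h5 e.symm]⟩

abbrev Lab := (Fin 3 × Bool) ⊕ (Fin 3 × Bool × Bool)

open Classical in
noncomputable def lab3 (a b c : ℝ) : Lab :=
  if 1 < |a| then .inl (0, decide (0 ≤ a))
  else if 1 < |b| then .inl (1, decide (0 ≤ b))
  else if 1 < |c| then .inl (2, decide (0 ≤ c))
  else match R3 a b c with
    | 0 => .inr (0, decide (0 ≤ b), decide (0 ≤ c))
    | 1 => .inr (1, decide (0 ≤ c), decide (0 ≤ a))
    | 2 => .inr (2, decide (0 ≤ a), decide (0 ≤ b))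

lemma fin3_cases (i : Fin 3) : i = 0 ∨ i = 1 ∨ i = 2 := by fin_cases i <;> simp

lemma lab3_inl (a b c : ℝ) (i : Fin 3) (s : Bool) (h : lab3 a b c = .inl (i, s)) :
    (i = 0 ∧ 1 < |a| ∧ (s = true ↔ 0 ≤ a)) ∨ (i = 1 ∧ 1 < |b| ∧ (s = true ↔ 0 ≤ b)) ∨
      (i = 2 ∧ 1 < |c| ∧ (s = true ↔ 0 ≤ c)) := by
  unfold lab3 at h
  split_ifs at h with h1 h2 h3
  · left; simp only [Sum.inl.injEq, Prod.mk.injEq] at h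
    exact ⟨h.1.symm, h1, by rw [← h.2]; simp⟩
  · right; left; simp only [Sum.inl.injEq, Prod.mk.injEq] at h
    exact ⟨h.1.symm, h2, by rw [← h.2]; simp⟩
  · right; right; simp only [Sum.inl.injEq, Prod.mk.injEq] at h
    exact ⟨h.1.symm, h3, by rw [← h.2]; simp⟩
  · rcases fin3_cases (R3 a b c) with hr | hr | hr <;> rw [hr] at h <;> simp at h

lemma lab3_inr (a b c : ℝ) (k : Fin 3) (s t : Bool) (h : lab3 a b c = .inr (k, s, t)) :
    |a| ≤ 1 ∧ |b| ≤ 1 ∧ |c| ≤ 1 ∧ R3 a b c = k ∧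
      ((k = 0 ∧ (s = true ↔ 0 ≤ b) ∧ (t = true ↔ 0 ≤ c)) ∨
       (k = 1 ∧ (s = true ↔ 0 ≤ c) ∧ (t = true ↔ 0 ≤ a)) ∨
       (k = 2 ∧ (s = true ↔ 0 ≤ a) ∧ (t = true ↔ 0 ≤ b))) := by
  unfold lab3 at h
  split_ifs at h with h1 h2 h3
  push_neg at h1 h2 h3
  refine ⟨h1, h2, h3, ?_, ?_⟩ <;>
    rcases fin3_cases (R3 a b c) with hr | hr | hr <;> rw [hr] at h <;>
      simp only [Sum.inr.injEq, Prod.mk.injEq] at h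
  · exact hr.trans h.1
  · exact hr.trans h.1
  · exact hr.trans h.1
  · exact Or.inl ⟨h.1.symm, by rw [← h.2.1]; simp, by rw [← h.2.2]; simp⟩
  · exact Or.inr (Or.inl ⟨h.1.symm, by rw [← h.2.1]; simp, by rw [← h.2.2]; simp⟩)
  · exact Or.inr (Or.inr ⟨h.1.symm, by rw [← h.2.1]; simp, by rw [← h.2.2]; simp⟩)

lemma same_lab (a b c x y z : ℝ) (hn1 : |a| + |b| + |c| = 2) (hn2 : |x| + |y| + |z| = 2)
    (h : lab3 a b c = lab3 x y z) :
    |a - x| + |b - y| + |c - z| < 2 := by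
  cases hval : lab3 a b c with
  | inl v =>
    obtain ⟨i, s⟩ := v
    have h2 : lab3 x y z = .inl (i, s) := h ▸ hval
    have c1 := lab3_inl a b c i s hval
    have c2 := lab3_inl x y z i s h2
    rcases c1 with ⟨hi, hA, hS⟩ | ⟨hi, hA, hS⟩ | ⟨hi, hA, hS⟩ <;> subst hi <;>
      rcases c2 with ⟨hi', hA', hS'⟩ | ⟨hi', hA', hS'⟩ | ⟨hi', hA', hS'⟩ <;>
        first
        | exact absurd hi' (by decide)
        | skip
    · exact vertex_core a b c x y z hn1 hn2 hA hA' (hS.symm.trans hS')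
    · have := vertex_core b a c y x z (by linarith) (by linarith) hA hA' (hS.symm.trans hS')
      linarith
    · have := vertex_core c a b z x y (by linarith) (by linarith) hA hA' (hS.symm.trans hS')
      linarith
  | inr v =>
    obtain ⟨k, s, t⟩ := v
    have h2 : lab3 x y z = .inr (k, s, t) := h ▸ hval
    obtain ⟨hA1, hB1, hC1, hR, hsg⟩ := lab3_inr a b c k s t hval
    obtain ⟨hA1', hB1', hC1', hR', hsg'⟩ := lab3_inr x y z k s t h2
    rcases fin3_cases k with hk | hk | hk <;> subst hk
    · obtain ⟨m1, m2, m3⟩ := R3_spec0 a b c hR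
      obtain ⟨m1', m2', m3'⟩ := R3_spec0 x y z hR'
      rcases hsg with ⟨_, e1, e2⟩ | ⟨hh, _⟩ | ⟨hh, _⟩ <;> [skip; exact absurd hh (by decide); exact absurd hh (by decide)]
      rcases hsg' with ⟨_, e1', e2'⟩ | ⟨hh, _⟩ | ⟨hh, _⟩ <;> [skip; exact absurd hh (by decide); exact absurd hh (by decide)]
      have := mid_core b c a y z x hB1 hC1 m1 m2 (by linarith) hB1' hC1' m1' m2' (by linarith)
        (e1.symm.trans e1') (e2.symm.trans e2') m3 m3'
      linarith
    · obtain ⟨m1, m2, m3⟩ := R3_spec1 a b c hR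
      obtain ⟨m1', m2', m3'⟩ := R3_spec1 x y z hR'
      rcases hsg with ⟨hh, _⟩ | ⟨_, e1, e2⟩ | ⟨hh, _⟩ <;> [exact absurd hh (by decide); skip; exact absurd hh (by decide)]
      rcases hsg' with ⟨hh, _⟩ | ⟨_, e1', e2'⟩ | ⟨hh, _⟩ <;> [exact absurd hh (by decide); skip; exact absurd hh (by decide)]
      have := mid_core c a b z x y hC1 hA1 m2 m1 (by linarith) hC1' hA1' m2' m1' (by linarith)
        (e1.symm.trans e1') (e2.symm.trans e2') m3 m3'
      linarith
    · obtain ⟨m1, m2, m3⟩ := R3_spec2 a b c hR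
      obtain ⟨m1', m2', m3'⟩ := R3_spec2 x y z hR'
      rcases hsg with ⟨hh, _⟩ | ⟨hh, _⟩ | ⟨_, e1, e2⟩ <;> [exact absurd hh (by decide); exact absurd hh (by decide); skip]
      rcases hsg' with ⟨hh, _⟩ | ⟨hh, _⟩ | ⟨_, e1', e2'⟩ <;> [exact absurd hh (by decide); exact absurd hh (by decide); skip]
      have := mid_core a b c x y z hA1 hB1 m1 m2 (by linarith) hA1' hB1' m1' m2' (by linarith)
        (e1.symm.trans e1') (e2.symm.trans e2') m3 m3'
      linarith

end Core

noncomputable abbrev E3 := EuclideanSpace ℝ (Fin 3)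

noncomputable def NN (x : E3) : ℝ := |x 0| + |x 1| + |x 2|

lemma NN_cont : Continuous NN := by unfold NN; fun_prop

lemma interior_O (O : Set E3) (hO : O = {x : E3 | |x 0| + |x 1| + |x 2| ≤ 1}) :
    interior O = {x : E3 | |x 0| + |x 1| + |x 2| < 1} := by
  subst hO
  apply subset_antisymm
  · intro x hx
    obtain ⟨ε, hε, hball⟩ := Metric.isOpen_iff.mp isOpen_interior x hx
    set δ : ℝ := ε / 4 with hδ
    have hδ0 : 0 < δ := by positivity
    set u : E3 := (WithLp.equiv 2 (Fin 3 → ℝ)).symm (fun t => if 0 ≤ x t then 1 else -1) with hu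
    have hut : ∀ t, u t = if 0 ≤ x t then (1:ℝ) else -1 := fun t => rfl
    set y : E3 := x + δ • u with hy
    have hyt : ∀ t, y t = x t + δ * u t := by
      intro t; rw [hy]; simp
    have hdist : dist y x < ε := by
      rw [EuclideanSpace.dist_eq]
      have h1 : ∀ t : Fin 3, dist (y t) (x t) ^ 2 = δ ^ 2 * (u t)^2 := by
        intro t
        rw [hyt t, Real.dist_eq, show x t + δ * u t - x t = δ * u t from by ring]
        rw [sq_abs]; ring
      have h2 : ∀ t : Fin 3, (u t)^2 = 1 := by
        intro t; rw [hut t]; split_ifs <;> norm_num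
      have h3 : Real.sqrt (∑ t : Fin 3, dist (y t) (x t) ^ 2) = Real.sqrt (3 * δ^2) := by
        congr 1
        rw [Fin.sum_univ_three, h1 0, h1 1, h1 2, h2 0, h2 1, h2 2]; ring
      rw [h3]
      have : Real.sqrt (3 * δ^2) < Real.sqrt ((4*δ)^2) := by
        apply Real.sqrt_lt_sqrt (by positivity); nlinarith
      rw [Real.sqrt_sq (by positivity)] at this
      rw [hδ] at this ⊢
      linarith
    have hyO := hball (by rwa [Metric.mem_ball])
    have hyO'' : y ∈ {x : E3 | |x 0| + |x 1| + |x 2| ≤ 1} := interior_subset hyO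
    have hyO' : |y 0| + |y 1| + |y 2| ≤ 1 := hyO''
    have key : ∀ t : Fin 3, |y t| = |x t| + δ := by
      intro t; rw [hyt t, hut t]
      rcases le_or_gt 0 (x t) with h | h
      · rw [if_pos h]; rw [abs_of_nonneg h, abs_of_nonneg (by linarith)]; ring
      · rw [if_neg (not_le.mpr h)]; rw [abs_of_neg h, abs_of_neg (by nlinarith)]; ring
    rw [key 0, key 1, key 2] at hyO'
    simp only [Set.mem_setOf_eq]
    linarith
  · apply interior_maximal
    · intro x hx
      simp only [Set.mem_setOf_eq] at *
      linarith
    · have : {x : E3 | |x 0| + |x 1| + |x 2| < 1} = NN ⁻¹' (Set.Iio 1) := rfl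
      rw [this]
      exact (isOpen_Iio).preimage NN_cont

lemma mem_vadd_O (O : Set E3) (hO : O = {x : E3 | |x 0| + |x 1| + |x 2| ≤ 1})
    (v x : E3) : x ∈ v +ᵥ O ↔ |x 0 - v 0| + |x 1 - v 1| + |x 2 - v 2| ≤ 1 := by
  rw [Set.mem_vadd_set_iff_neg_vadd_mem, hO]
  have h : ∀ t : Fin 3, (-v +ᵥ x) t = x t - v t := by
    intro t; simp [vadd_eq_add, sub_eq_neg_add]
  simp only [Set.mem_setOf_eq, h]

lemma interior_vadd_O (O : Set E3) (hO : O = {x : E3 | |x 0| + |x 1| + |x 2| ≤ 1})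
    (v : E3) : interior (v +ᵥ O) =
      {x : E3 | |x 0 - v 0| + |x 1 - v 1| + |x 2 - v 2| < 1} := by
  rw [interior_vadd, interior_O O hO]
  ext x
  rw [Set.mem_vadd_set_iff_neg_vadd_mem]
  have h : ∀ t : Fin 3, (-v +ᵥ x) t = x t - v t := by
    intro t; simp [vadd_eq_add, sub_eq_neg_add]
  simp only [Set.mem_setOf_eq, h]

def T18 : Fin 18 → Fin 3 → ℤ :=
  ![![2,0,0], ![-2,0,0], ![0,2,0], ![0,-2,0], ![0,0,2], ![0,0,-2],
    ![1,1,0], ![1,-1,0], ![-1,1,0], ![-1,-1,0],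
    ![1,0,1], ![1,0,-1], ![-1,0,1], ![-1,0,-1],
    ![0,1,1], ![0,1,-1], ![0,-1,1], ![0,-1,-1]]

lemma T18_norm : ∀ i : Fin 18, |T18 i 0| + |T18 i 1| + |T18 i 2| = 2 := by decide

lemma T18_dist : ∀ i j : Fin 18, i ≠ j →
    2 ≤ |T18 i 0 - T18 j 0| + |T18 i 1 - T18 j 1| + |T18 i 2 - T18 j 2| := by decide

noncomputable def vv : Fin 18 → E3 :=
  fun i => (WithLp.equiv 2 (Fin 3 → ℝ)).symm (fun t => (T18 i t : ℝ))

lemma vv_apply (i : Fin 18) (t : Fin 3) : vv i t = (T18 i t : ℝ) := rfl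

/-- **Robins–Salowe, Talata, Larman–Zong.** The Hadwiger (translative kissing) number
of the regular octahedron `O = {x : |x₁| + |x₂| + |x₃| ≤ 1}` is exactly 18. -/
theorem hadwiger_number_octahedron
    (O : Set (EuclideanSpace ℝ (Fin 3)))
    (hO : O = {x : EuclideanSpace ℝ (Fin 3) | |x 0| + |x 1| + |x 2| ≤ 1}) :
    IsGreatest {k : ℕ | ∃ v : Fin k → EuclideanSpace ℝ (Fin 3),
      (∀ i j, i ≠ j → Disjoint (interior (v i +ᵥ O)) (interior (v j +ᵥ O))) ∧
      (∀ i, ((v i +ᵥ O) ∩ O).Nonempty ∧ Disjoint (interior (v i +ᵥ O)) (interior O))}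
      18 := by
  constructor
  · -- lower bound: the 18 explicit translates
    refine ⟨vv, ?_, ?_⟩
    · intro i j hij
      rw [Set.disjoint_left]
      intro p hp1 hp2
      rw [interior_vadd_O O hO] at hp1 hp2
      simp only [Set.mem_setOf_eq] at hp1 hp2
      have hd : (2:ℝ) ≤ |vv i 0 - vv j 0| + |vv i 1 - vv j 1| + |vv i 2 - vv j 2| := by
        have := T18_dist i j hij
        simp only [vv_apply]
        exact_mod_cast this
      have t0 := abs_sub_le (vv i 0) (p 0) (vv j 0)
      have t1 := abs_sub_le (vv i 1) (p 1) (vv j 1)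
      have t2 := abs_sub_le (vv i 2) (p 2) (vv j 2)
      have a0 := abs_sub_comm (vv i 0) (p 0)
      have a1 := abs_sub_comm (vv i 1) (p 1)
      have a2 := abs_sub_comm (vv i 2) (p 2)
      linarith
    · intro i
      have hnorm : |vv i 0| + |vv i 1| + |vv i 2| = 2 := by
        have := T18_norm i
        simp only [vv_apply]
        exact_mod_cast this
      constructor
      · refine ⟨(2⁻¹ : ℝ) • vv i, ?_, ?_⟩
        · rw [mem_vadd_O O hO]
          have h : ∀ t : Fin 3, ((2⁻¹ : ℝ) • vv i) t - vv i t = -(vv i t) / 2 := by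
            intro t; simp; ring
          rw [h 0, h 1, h 2]
          rw [abs_div, abs_div, abs_div, abs_neg, abs_neg, abs_neg]
          rw [abs_of_pos (by norm_num : (0:ℝ) < 2)]
          linarith
        · rw [hO]
          have h : ∀ t : Fin 3, ((2⁻¹ : ℝ) • vv i) t = vv i t / 2 := by
            intro t; simp; ring
          simp only [Set.mem_setOf_eq, h 0, h 1, h 2]
          rw [abs_div, abs_div, abs_div, abs_of_pos (by norm_num : (0:ℝ) < 2)]
          linarith
      · rw [Set.disjoint_left]
        intro p hp1 hp2
        rw [interior_vadd_O O hO] at hp1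
        rw [interior_O O hO] at hp2
        simp only [Set.mem_setOf_eq] at hp1 hp2
        have t0 := abs_sub_le (vv i 0) (p 0) (0:ℝ)
        have t1 := abs_sub_le (vv i 1) (p 1) (0:ℝ)
        have t2 := abs_sub_le (vv i 2) (p 2) (0:ℝ)
        have a0 := abs_sub_comm (vv i 0) (p 0)
        have a1 := abs_sub_comm (vv i 1) (p 1)
        have a2 := abs_sub_comm (vv i 2) (p 2)
        simp only [sub_zero] at t0 t1 t2
        linarith
  · -- upper bound
    intro k hk
    by_contra hcon
    push_neg at hcon
    obtain ⟨v, hdisj, htouch⟩ := hk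
    have hemb : (19 : ℕ) ≤ k := hcon
    set w : Fin 19 → EuclideanSpace ℝ (Fin 3) := fun i => v (Fin.castLE hemb i) with hw
    -- each translate touches: norm = 2
    have hnorm : ∀ i : Fin 19, |w i 0| + |w i 1| + |w i 2| = 2 := by
      intro i
      have hle : |w i 0| + |w i 1| + |w i 2| ≤ 2 := by
        obtain ⟨p, hp1, hp2⟩ := (htouch (Fin.castLE hemb i)).1
        rw [mem_vadd_O O hO] at hp1
        rw [hO] at hp2
        simp only [Set.mem_setOf_eq] at hp2
        have t0 := abs_sub_le (w i 0) (p 0) (0:ℝ)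
        have t1 := abs_sub_le (w i 1) (p 1) (0:ℝ)
        have t2 := abs_sub_le (w i 2) (p 2) (0:ℝ)
        have a0 := abs_sub_comm (w i 0) (p 0)
        have a1 := abs_sub_comm (w i 1) (p 1)
        have a2 := abs_sub_comm (w i 2) (p 2)
        simp only [sub_zero] at t0 t1 t2
        have hp1' : |p 0 - w i 0| + |p 1 - w i 1| + |p 2 - w i 2| ≤ 1 := hp1
        linarith
      have hge : 2 ≤ |w i 0| + |w i 1| + |w i 2| := by
        by_contra hc
        push_neg at hc
        have hdis := (htouch (Fin.castLE hemb i)).2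
        rw [Set.disjoint_left] at hdis
        refine hdis (a := (2⁻¹ : ℝ) • w i) ?_ ?_
        · change _ ∈ interior (w i +ᵥ O)
          rw [interior_vadd_O O hO]
          have h : ∀ t : Fin 3, ((2⁻¹ : ℝ) • w i) t - w i t = -(w i t) / 2 := by
            intro t; simp; ring
          simp only [Set.mem_setOf_eq, h 0, h 1, h 2]
          rw [abs_div, abs_div, abs_div, abs_neg, abs_neg, abs_neg]
          rw [abs_of_pos (by norm_num : (0:ℝ) < 2)]
          linarith
        · rw [interior_O O hO]
          have h : ∀ t : Fin 3, ((2⁻¹ : ℝ) • w i) t = w i t / 2 := by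
            intro t; simp; ring
          simp only [Set.mem_setOf_eq, h 0, h 1, h 2]
          rw [abs_div, abs_div, abs_div, abs_of_pos (by norm_num : (0:ℝ) < 2)]
          linarith
      linarith
    -- pairwise distances at least 2
    have hdist : ∀ i j : Fin 19, i ≠ j →
        2 ≤ |w i 0 - w j 0| + |w i 1 - w j 1| + |w i 2 - w j 2| := by
      intro i j hij
      by_contra hc
      push_neg at hc
      have hij' : Fin.castLE hemb i ≠ Fin.castLE hemb j := by
        intro hfe; exact hij (Fin.castLE_injective hemb hfe)
      have hdis := hdisj (Fin.castLE hemb i) (Fin.castLE hemb j) hij'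
      rw [Set.disjoint_left] at hdis
      refine hdis (a := (2⁻¹ : ℝ) • (w i + w j)) ?_ ?_
      · change _ ∈ interior (w i +ᵥ O)
        rw [interior_vadd_O O hO]
        have h : ∀ t : Fin 3, ((2⁻¹ : ℝ) • (w i + w j)) t - w i t = (w j t - w i t) / 2 := by
          intro t; simp; ring
        simp only [Set.mem_setOf_eq, h 0, h 1, h 2]
        rw [abs_div, abs_div, abs_div, abs_of_pos (by norm_num : (0:ℝ) < 2)]
        have a0 := abs_sub_comm (w j 0) (w i 0)
        have a1 := abs_sub_comm (w j 1) (w i 1)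
        have a2 := abs_sub_comm (w j 2) (w i 2)
        linarith
      · change _ ∈ interior (w j +ᵥ O)
        rw [interior_vadd_O O hO]
        have h : ∀ t : Fin 3, ((2⁻¹ : ℝ) • (w i + w j)) t - w j t = (w i t - w j t) / 2 := by
          intro t; simp; ring
        simp only [Set.mem_setOf_eq, h 0, h 1, h 2]
        rw [abs_div, abs_div, abs_div, abs_of_pos (by norm_num : (0:ℝ) < 2)]
        linarith
    -- pigeonhole on 18 labels
    have hcard : Fintype.card Lab < Fintype.card (Fin 19) := by simp
    obtain ⟨i, j, hij, hsame⟩ :=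
      Fintype.exists_ne_map_eq_of_card_lt (fun i : Fin 19 => lab3 (w i 0) (w i 1) (w i 2)) hcard
    have := same_lab (w i 0) (w i 1) (w i 2) (w j 0) (w j 1) (w j 2)
      (hnorm i) (hnorm j) hsame
    have := hdist i j hij
    linarith
end

section
/- Let M be a real normed vector space of finite dimension n, and let S ⊆ M be a set such that for some d > 0 all pairwise distances between distinct points of S equal d. Then S has at most 2^n points. -/
open MeasureTheory Set Pointwise ENNReal NNReal

lemma equilateral_key (E : Type*) [NormedAddCommGroup E] [NormedSpace ℝ E]
    [FiniteDimensional ℝ E]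
    (T : Finset E) (d : ℝ) (hd : 0 < d)
    (hT : ∀ x ∈ T, ∀ y ∈ T, x ≠ y → dist x y = d)
    (hspan : affineSpan ℝ (T : Set E) = ⊤) :
    T.card ≤ 2 ^ (Module.finrank ℝ E) := by
  borelize E
  set m := Module.finrank ℝ E with hm
  set μ : Measure E := (Module.finBasis ℝ E).addHaar with hμ
  set K : Set E := convexHull ℝ (T : Set E) with hK
  have hKconv : Convex ℝ K := convex_convexHull ℝ _
  have hKcomp : IsCompact K := T.finite_toSet.isCompact_convexHull ℝ
  have hTK : (T : Set E) ⊆ K := subset_convexHull ℝ _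
  have hdiam : ∀ p ∈ K, ∀ q ∈ K, dist p q ≤ d := by
    intro p hp q hq
    have h1 : Metric.diam K = Metric.diam (T : Set E) := convexHull_diam _
    have h2 : Metric.diam (T : Set E) ≤ d := by
      apply Metric.diam_le_of_forall_dist_le hd.le
      intro x hx y hy
      rcases eq_or_ne x y with rfl | hne
      · simpa using hd.le
      · exact (hT x hx y hy hne).le
    calc dist p q ≤ Metric.diam K := Metric.dist_le_diam_of_mem hKcomp.isBounded hp hq
      _ ≤ d := h1 ▸ h2
  have hKpos : 0 < μ K := by
    have hint : (interior K).Nonempty := by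
      rw [hKconv.interior_nonempty_iff_affineSpan_eq_top, affineSpan_convexHull]
      exact hspan
    exact lt_of_lt_of_le (isOpen_interior.measure_pos μ hint) (measure_mono interior_subset)
  have hKfin : μ K < ⊤ := hKcomp.measure_lt_top
  set C : E → Set E := fun x => (2⁻¹ : ℝ) • (x +ᵥ K) with hC
  have hCsub : ∀ x ∈ T, C x ⊆ K := by
    intro x hx z hz
    obtain ⟨w, ⟨k, hk, rfl⟩, rfl⟩ := hz
    have h2 := hKconv (hTK hx) hk (by norm_num : (0:ℝ) ≤ 2⁻¹) (by norm_num : (0:ℝ) ≤ 2⁻¹)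
      (by norm_num)
    simpa [vadd_eq_add, smul_add] using h2
  have hCmeas : ∀ x, μ (C x) = ENNReal.ofReal ((2:ℝ)⁻¹ ^ m) * μ K := by
    intro x
    rw [hC]
    simp only
    rw [Measure.addHaar_smul_of_nonneg _ (by norm_num : (0:ℝ) ≤ 2⁻¹), measure_vadd, hm]
  have hCconv : ∀ x, Convex ℝ (C x) := fun x => (hKconv.vadd x).smul _
  have hCclosed : ∀ x, IsClosed (C x) := by
    intro x
    have h1 : IsCompact (x +ᵥ K) := by
      simpa [← Set.image_vadd, vadd_eq_add] using hKcomp.image (continuous_add_left x)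
    exact (h1.smul (2⁻¹ : ℝ)).isClosed
  have hCint : ∀ x, interior (C x) = (2⁻¹ : ℝ) • (x +ᵥ interior K) := by
    intro x
    rw [hC]
    simp only
    rw [interior_smul₀ (by norm_num : (2:ℝ)⁻¹ ≠ 0), interior_vadd]
  have hdisj : ∀ x ∈ T, ∀ y ∈ T, x ≠ y → interior (C x) ∩ interior (C y) = ∅ := by
    intro x hx y hy hxy
    rw [Set.eq_empty_iff_forall_notMem]
    rintro z ⟨hzx, hzy⟩
    rw [hCint] at hzx hzy
    obtain ⟨w₁, ⟨a, ha, rfl⟩, hz₁⟩ := hzx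
    obtain ⟨w₂, ⟨b, hb, rfl⟩, hz₂⟩ := hzy
    have hab : x + a = y + b := by
      have h3 : (2⁻¹ : ℝ) • (x +ᵥ a) = (2⁻¹ : ℝ) • (y +ᵥ b) := hz₁.trans hz₂.symm
      have := smul_right_injective E (by norm_num : (2:ℝ)⁻¹ ≠ 0) h3
      simpa [vadd_eq_add] using this
    have hba : b - a = x - y := by
      have h4 := hab
      have : x - y = (x + a) - (y + a) := by abel
      rw [this, h4]; abel
    have hnorm : ‖b - a‖ = d := by
      rw [hba, ← dist_eq_norm]
      exact hT x hx y hy hxy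
    obtain ⟨ε, hε, hball⟩ := Metric.isOpen_iff.1 isOpen_interior a ha
    set δ : ℝ := ε / (2 * d) with hδ
    have hδpos : 0 < δ := div_pos hε (by linarith)
    set a' : E := a - δ • (b - a) with ha'
    have hδd : δ * d = ε / 2 := by
      rw [hδ]; field_simp
    have ha'K : a' ∈ K := by
      apply interior_subset
      apply hball
      rw [Metric.mem_ball, dist_eq_norm, ha']
      have h5 : a - δ • (b - a) - a = -(δ • (b - a)) := by abel
      rw [h5, norm_neg, norm_smul, hnorm, Real.norm_eq_abs, abs_of_pos hδpos, hδd]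
      linarith
    have hfar : dist b a' > d := by
      rw [dist_eq_norm, ha']
      have h6 : b - (a - δ • (b - a)) = (1 + δ) • (b - a) := by
        rw [add_smul, one_smul]; abel
      rw [h6, norm_smul, Real.norm_eq_abs, abs_of_pos (by linarith : (0:ℝ) < 1 + δ), hnorm]
      nlinarith
    exact absurd (hdiam b (interior_subset hb) a' ha'K) (not_le.2 hfar)
  have haedisj : (T : Set E).Pairwise (Function.onFun (AEDisjoint μ) C) := by
    intro x hx y hy hxy
    have hsub : C x ∩ C y ⊆ frontier (C x) ∪ frontier (C y) := by
      rintro z ⟨hzx, hzy⟩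
      by_cases h1 : z ∈ interior (C x)
      · by_cases h2 : z ∈ interior (C y)
        · exfalso
          have h3 := hdisj x hx y hy hxy
          rw [Set.eq_empty_iff_forall_notMem] at h3
          exact h3 z ⟨h1, h2⟩
        · right
          rw [(hCclosed y).frontier_eq]
          exact ⟨hzy, h2⟩
      · left
        rw [(hCclosed x).frontier_eq]
        exact ⟨hzx, h1⟩
    have : μ (C x ∩ C y) = 0 := by
      apply measure_mono_null hsub
      apply measure_union_null
      · exact (hCconv x).addHaar_frontier μ
      · exact (hCconv y).addHaar_frontier μ
    exact this
  have hmeas : μ (⋃ x ∈ T, C x) = ∑ x ∈ T, μ (C x) := by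
    apply measure_biUnion_finset₀ haedisj
    intro x _
    exact (hCclosed x).measurableSet.nullMeasurableSet
  have hle : (T.card : ℝ≥0∞) * (ENNReal.ofReal ((2:ℝ)⁻¹ ^ m) * μ K) ≤ μ K := by
    calc ((T.card : ℝ≥0∞) * (ENNReal.ofReal ((2:ℝ)⁻¹ ^ m) * μ K))
        = ∑ x ∈ T, μ (C x) := by
          rw [Finset.sum_congr rfl (fun x _ => hCmeas x), Finset.sum_const, nsmul_eq_mul]
      _ = μ (⋃ x ∈ T, C x) := hmeas.symm
      _ ≤ μ K := by
          apply measure_mono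
          exact Set.iUnion₂_subset hCsub
  -- conclude
  have hc : ENNReal.ofReal ((2:ℝ)⁻¹ ^ m) = ((2:ℝ≥0∞) ^ m)⁻¹ := by
    have h2 : ENNReal.ofReal ((2:ℝ)⁻¹) = (2:ℝ≥0∞)⁻¹ := by
      rw [ENNReal.ofReal_inv_of_pos (by norm_num)]
      norm_num
    rw [ENNReal.ofReal_pow (by norm_num : (0:ℝ) ≤ 2⁻¹), h2, ← ENNReal.inv_pow]
  rw [hc] at hle
  have h2m : ((2:ℝ≥0∞) ^ m) ≠ 0 := by positivity
  have h2m' : ((2:ℝ≥0∞) ^ m) ≠ ⊤ := by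
    exact ENNReal.pow_ne_top (by norm_num)
  have hfinal : (T.card : ℝ≥0∞) ≤ 2 ^ m := by
    have hμne : μ K ≠ 0 := hKpos.ne'
    have hμtop : μ K ≠ ⊤ := hKfin.ne
    have s1 : (T.card : ℝ≥0∞) * ((2:ℝ≥0∞) ^ m)⁻¹ * μ K ≤ 1 * μ K := by
      rw [one_mul, mul_assoc]
      exact hle
    have s2 : (T.card : ℝ≥0∞) * ((2:ℝ≥0∞) ^ m)⁻¹ ≤ 1 :=
      (ENNReal.mul_le_mul_iff_left hμne hμtop).1 s1
    have s3 := mul_le_mul_left s2 ((2:ℝ≥0∞) ^ m)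
    rwa [mul_assoc, ENNReal.inv_mul_cancel h2m h2m', mul_one, one_mul] at s3
  exact_mod_cast hfinal

lemma equilateral_finset_card_le (n : ℕ) (M : Type*)
    [NormedAddCommGroup M] [NormedSpace ℝ M] [FiniteDimensional ℝ M]
    (hdim : Module.finrank ℝ M = n)
    (T : Finset M) (d : ℝ) (hd : 0 < d)
    (hT : ∀ x ∈ T, ∀ y ∈ T, x ≠ y → dist x y = d) :
    T.card ≤ 2 ^ n := by
  classical
  rcases T.eq_empty_or_nonempty with rfl | ⟨t0, ht0⟩
  · simp
  set g : M → M := fun x => x - t0 with hg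
  have hginj : Function.Injective g := fun a b h => by
    simpa [hg] using h
  set T1 := T.image g with hT1
  have hcard1 : T1.card = T.card := Finset.card_image_of_injective _ hginj
  have hT1d : ∀ x ∈ T1, ∀ y ∈ T1, x ≠ y → dist x y = d := by
    intro x hx y hy hxy
    obtain ⟨a, ha, rfl⟩ := Finset.mem_image.1 hx
    obtain ⟨b, hb, rfl⟩ := Finset.mem_image.1 hy
    rw [hg]
    simp only
    rw [dist_sub_right]
    exact hT a ha b hb (fun h => hxy (by rw [h]))
  have h0T1 : (0 : M) ∈ T1 := by
    rw [hT1, Finset.mem_image]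
    exact ⟨t0, ht0, by simp [hg]⟩
  set E := Submodule.span ℝ (T1 : Set M) with hE
  have hmem : ∀ x ∈ T1, x ∈ E := fun x hx => Submodule.subset_span hx
  set T2 : Finset E := T1.subtype (· ∈ E) with hT2
  have hcard2 : T2.card = T1.card := by
    rw [hT2, Finset.card_subtype, Finset.filter_true_of_mem (fun x hx => hmem x hx)]
  have hT2mem : ∀ z : E, z ∈ T2 ↔ (z : M) ∈ T1 := by
    intro z
    rw [hT2, Finset.mem_subtype]
  have hT2d : ∀ x ∈ T2, ∀ y ∈ T2, x ≠ y → dist x y = d := by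
    intro x hx y hy hxy
    rw [Subtype.dist_eq]
    exact hT1d _ ((hT2mem x).1 hx) _ ((hT2mem y).1 hy)
      (fun h => hxy (Subtype.coe_injective h))
  have hspan2 : Submodule.span ℝ (T2 : Set E) = ⊤ := by
    apply Submodule.map_injective_of_injective E.injective_subtype
    rw [Submodule.map_span, Submodule.map_top, Submodule.range_subtype]
    congr 1
    ext y
    simp only [Set.mem_image, Finset.mem_coe]
    constructor
    · rintro ⟨z, hz, rfl⟩
      exact (hT2mem z).1 hz
    · intro hy
      exact ⟨⟨y, hmem y hy⟩, (hT2mem _).2 hy, rfl⟩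
  have h0T2 : (0 : E) ∈ T2 := (hT2mem 0).2 (by simpa using h0T1)
  have haff : affineSpan ℝ (T2 : Set E) = ⊤ := by
    rw [AffineSubspace.affineSpan_eq_top_iff_vectorSpan_eq_top_of_nonempty ℝ E E
      ⟨0, Finset.mem_coe.2 h0T2⟩]
    rw [vectorSpan_def]
    rw [eq_top_iff, ← hspan2]
    apply Submodule.span_le.2
    intro x hx
    apply Submodule.subset_span
    exact ⟨x, hx, 0, Finset.mem_coe.2 h0T2, by simp⟩
  have hkey := equilateral_key E T2 d hd hT2d haff
  have hrank : Module.finrank ℝ E ≤ n := hdim ▸ Submodule.finrank_le E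
  calc T.card = T2.card := by rw [hcard2, hcard1]
    _ ≤ 2 ^ Module.finrank ℝ E := hkey
    _ ≤ 2 ^ n := Nat.pow_le_pow_right (by norm_num) hrank

/-- **Petty, P. S. Soltan (via Danzer–Grünbaum).** An equilateral set in an
`n`-dimensional real normed (Minkowski) space has at most `2^n` points. -/
theorem equilateral_set_card_le (n : ℕ) (M : Type*)
    [NormedAddCommGroup M] [NormedSpace ℝ M] [FiniteDimensional ℝ M]
    (hdim : Module.finrank ℝ M = n)
    (S : Set M) (d : ℝ) (hd : 0 < d)
    (hS : ∀ x ∈ S, ∀ y ∈ S, x ≠ y → dist x y = d) :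
    S.Finite ∧ S.ncard ≤ 2 ^ n := by
  have key : ∀ t : Set M, t ⊆ S → t.Finite → t.ncard ≤ 2 ^ n := by
    intro t hts htfin
    have := equilateral_finset_card_le n M hdim htfin.toFinset d hd (by
      intro x hx y hy hxy
      exact hS x (hts (htfin.mem_toFinset.1 hx)) y (hts (htfin.mem_toFinset.1 hy)) hxy)
    rwa [Set.ncard_eq_toFinset_card t htfin]
  have hfin : S.Finite := by
    by_contra hinf
    rw [← Set.not_infinite, not_not] at hinf
    obtain ⟨t, hts, htfin, hcard⟩ := Set.Infinite.exists_subset_ncard_eq hinf (2 ^ n + 1)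
    have := key t hts htfin
    omega
  exact ⟨hfin, key S (subset_refl S) hfin⟩
end

section
/- Let M be a real normed vector space of dimension 3. Then there exist four points in M whose pairwise distances are all equal to some common d > 0. -/
set_option maxHeartbeats 1000000

open Set Metric

section PettyAux

variable {M : Type*} [NormedAddCommGroup M] [NormedSpace ℝ M]

/-- The key comparison lemma: if the segment from `v` to `y` crosses the ray through `x`
(all three unit vectors), then `x` is closer to `v` than `y` is. -/
private lemma petty_key {v x y : M} (hv : ‖v‖ = 1) (hx : ‖x‖ = 1) (hy : ‖y‖ = 1)
    {s τ : ℝ} (hs0 : 0 ≤ s) (hs1 : s ≤ 1) (hτ : 0 ≤ τ)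
    (h : (1 - s) • v + s • y = τ • x) : ‖x - v‖ ≤ ‖y - v‖ := by
  have hτn : ‖τ • x‖ = τ := by
    rw [norm_smul, hx, mul_one, Real.norm_eq_abs, abs_of_nonneg hτ]
  have hτ1 : τ ≤ 1 := by
    have h1 : ‖(1 - s) • v + s • y‖ ≤ (1 - s) * 1 + s * 1 := by
      refine (norm_add_le _ _).trans ?_
      rw [norm_smul, norm_smul, hv, hy, Real.norm_eq_abs, Real.norm_eq_abs,
        abs_of_nonneg hs0, abs_of_nonneg (by linarith : (0:ℝ) ≤ 1 - s)]
    rw [h, hτn] at h1; linarith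
  have hxp : ‖x - τ • x‖ = 1 - τ := by
    rw [show x - τ • x = (1 - τ) • x by module, norm_smul, hx, mul_one,
      Real.norm_eq_abs, abs_of_nonneg (by linarith)]
  have hpv : ‖τ • x - v‖ = s * ‖y - v‖ := by
    rw [show τ • x - v = s • (y - v) by rw [← h]; module, norm_smul, Real.norm_eq_abs,
      abs_of_nonneg hs0]
  have hpy : ‖τ • x - y‖ = (1 - s) * ‖y - v‖ := by
    rw [show τ • x - y = (1 - s) • (v - y) by rw [← h]; module, norm_smul, Real.norm_eq_abs,
      abs_of_nonneg (by linarith : (0:ℝ) ≤ 1 - s), norm_sub_rev]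
  have h2 : 1 - τ ≤ (1 - s) * ‖y - v‖ := by
    have h3 := norm_sub_norm_le y (τ • x)
    rw [hy, hτn, norm_sub_rev, hpy] at h3; linarith
  have tri : ‖x - v‖ ≤ ‖x - τ • x‖ + ‖τ • x - v‖ := by
    have := dist_triangle x (τ • x) v
    simpa [dist_eq_norm] using this
  rw [hxp, hpv] at tri
  nlinarith [norm_nonneg (y - v)]

/-- Existence of coordinates transverse to `v`. -/
private lemma petty_coords [FiniteDimensional ℝ M] (hdim : Module.finrank ℝ M = 3)
    {v : M} (hv : v ≠ 0) :
    ∃ (pr : M →ₗ[ℝ] (Fin 2 → ℝ)) (w : (Fin 2 → ℝ) →ₗ[ℝ] M),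
      pr v = 0 ∧ (∀ c, pr (w c) = c) ∧ ∀ x : M, ∃ a : ℝ, x = a • v + w (pr x) := by
  set p : Submodule ℝ M := Submodule.span ℝ {v} with hp
  obtain ⟨q, hq⟩ := p.exists_isCompl
  have hq2 : Module.finrank ℝ q = 2 := by
    have h1 := Submodule.finrank_add_eq_of_isCompl hq
    have h2 : Module.finrank ℝ p = 1 := finrank_span_singleton hv
    omega
  let bq : Module.Basis (Fin 2) ℝ q := Module.finBasisOfFinrankEq ℝ q hq2
  let proj : M →ₗ[ℝ] q := q.projectionOnto p hq.symm
  refine ⟨(bq.equivFun : q ≃ₗ[ℝ] (Fin 2 → ℝ)).toLinearMap ∘ₗ proj,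
    q.subtype ∘ₗ ((bq.equivFun.symm : (Fin 2 → ℝ) ≃ₗ[ℝ] q) : (Fin 2 → ℝ) →ₗ[ℝ] q),
    ?_, ?_, ?_⟩
  · have h0 : proj v = 0 :=
      Submodule.projectionOnto_apply_of_mem_right hq.symm (Submodule.mem_span_singleton_self v)
    simp [h0]
  · intro c
    have h1 : proj ((bq.equivFun.symm c : q) : M) = bq.equivFun.symm c :=
      Submodule.projectionOnto_apply_left hq.symm _
    show bq.equivFun (proj ((bq.equivFun.symm c : q) : M)) = c
    rw [h1, LinearEquiv.apply_symm_apply]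
  · intro x
    have hsum := Submodule.projection_add_projection_eq_self hq x
    obtain ⟨a, ha⟩ := Submodule.mem_span_singleton.1 (p.projectionOnto q hq x).2
    refine ⟨a, ?_⟩
    have hw : (q.subtype ∘ₗ ((bq.equivFun.symm : (Fin 2 → ℝ) ≃ₗ[ℝ] q) : (Fin 2 → ℝ) →ₗ[ℝ] q))
        (((bq.equivFun : q ≃ₗ[ℝ] (Fin 2 → ℝ)).toLinearMap ∘ₗ proj) x) = ((proj x : q) : M) := by
      show ((bq.equivFun.symm (bq.equivFun (proj x)) : q) : M) = ((proj x : q) : M)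
      rw [LinearEquiv.symm_apply_apply]
    rw [hw, ha]
    exact hsum.symm


/-- The half-circle fiber of the two-sphere intersection in direction `ω` is connected. -/
private lemma petty_fiber [FiniteDimensional ℝ M] {v : M} (hv : ‖v‖ = 1)
    (pr : M →ₗ[ℝ] (Fin 2 → ℝ)) (w : (Fin 2 → ℝ) →ₗ[ℝ] M)
    (hprv : pr v = 0) (hprw : ∀ c, pr (w c) = c)
    (hdec : ∀ x : M, ∃ a : ℝ, x = a • v + w (pr x))
    {ω : Fin 2 → ℝ} (hω : ω ≠ 0) :
    IsConnected {x : M | (‖x‖ = 1 ∧ ‖x - v‖ = 1) ∧ ∃ r : ℝ, 0 < r ∧ pr x = r • ω} := by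
  have hvne : v ≠ 0 := by
    intro h; rw [h, norm_zero] at hv; norm_num at hv
  have hcne : ∀ t : ℝ, Real.cos t • v + Real.sin t • w ω ≠ 0 := by
    intro t h
    have h1 : Real.sin t • ω = 0 := by
      have h2 := congrArg pr h
      simpa [map_add, map_smul, hprv, hprw] using h2
    have hsin : Real.sin t = 0 := by
      rcases smul_eq_zero.1 h1 with h' | h'
      · exact h'
      · exact absurd h' hω
    have hcos : Real.cos t = 0 := by
      rw [hsin, zero_smul, add_zero] at h
      rcases smul_eq_zero.1 h with h' | h'
      · exact h'
      · exact absurd h' hvne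
    nlinarith [Real.sin_sq_add_cos_sq t]
  set n : ℝ → ℝ := fun t => ‖Real.cos t • v + Real.sin t • w ω‖ with hndef
  have hn : ∀ t, 0 < n t := fun t => norm_pos_iff.2 (hcne t)
  set γ : ℝ → M := fun t => (n t)⁻¹ • (Real.cos t • v + Real.sin t • w ω) with hγdef
  have hexp : ∀ t, γ t = ((n t)⁻¹ * Real.cos t) • v + ((n t)⁻¹ * Real.sin t) • w ω := by
    intro t
    rw [hγdef]
    simp only [smul_add, smul_smul]
  have hγnorm : ∀ t, ‖γ t‖ = 1 := by
    intro t
    rw [hγdef]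
    simp only []
    rw [norm_smul, Real.norm_eq_abs, abs_of_pos (inv_pos.2 (hn t))]
    exact inv_mul_cancel₀ (hn t).ne'
  have hγ0 : γ 0 = v := by
    rw [hγdef]
    simp only [Real.cos_zero, Real.sin_zero, one_smul, zero_smul, add_zero, hndef]
    rw [hv, inv_one, one_smul]
  have hγpi : γ Real.pi = -v := by
    rw [hγdef]
    simp only [Real.cos_pi, Real.sin_pi, zero_smul, add_zero, neg_smul, one_smul, hndef]
    rw [norm_neg, hv, inv_one, one_smul]
  have hγcont : Continuous γ := by
    have hc : Continuous fun t => Real.cos t • v + Real.sin t • w ω :=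
      (Real.continuous_cos.smul continuous_const).add (Real.continuous_sin.smul continuous_const)
    exact (hc.norm.inv₀ fun t => (hn t).ne').smul hc
  have hπγ : ∀ t, pr (γ t) = ((n t)⁻¹ * Real.sin t) • ω := by
    intro t
    rw [hγdef]
    simp only [map_smul, map_add, hprv, hprw, smul_zero, zero_add, smul_smul]
  have mono : ∀ t₁ ∈ Icc (0:ℝ) Real.pi, ∀ t₂ ∈ Icc (0:ℝ) Real.pi, t₁ ≤ t₂ →
      ‖γ t₁ - v‖ ≤ ‖γ t₂ - v‖ := by
    intro t₁ ht₁ t₂ ht₂ h12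
    rcases eq_or_lt_of_le ht₁.1 with h0 | h0
    · rw [← h0, hγ0, sub_self, norm_zero]
      positivity
    rcases eq_or_lt_of_le ht₂.2 with hpi | hpi
    · rw [hpi, hγpi]
      have h2 : ‖-v - v‖ = 2 := by
        rw [show -v - v = -((2:ℝ) • v) by module, norm_neg, norm_smul, hv]
        norm_num
      rw [h2]
      calc ‖γ t₁ - v‖ ≤ ‖γ t₁‖ + ‖v‖ := norm_sub_le _ _
        _ = 2 := by rw [hγnorm, hv]; norm_num
    have hs1pos : 0 < Real.sin t₁ := Real.sin_pos_of_pos_of_lt_pi h0 (lt_of_le_of_lt h12 hpi)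
    have hs2pos : 0 < Real.sin t₂ := Real.sin_pos_of_pos_of_lt_pi (lt_of_lt_of_le h0 h12) hpi
    set a₁ := (n t₁)⁻¹ * Real.cos t₁ with ha₁
    set r₁ := (n t₁)⁻¹ * Real.sin t₁ with hr₁
    set a₂ := (n t₂)⁻¹ * Real.cos t₂ with ha₂
    set r₂ := (n t₂)⁻¹ * Real.sin t₂ with hr₂
    have he₁ : γ t₁ = a₁ • v + r₁ • w ω := by rw [hexp t₁, ha₁, hr₁]
    have he₂ : γ t₂ = a₂ • v + r₂ • w ω := by rw [hexp t₂, ha₂, hr₂]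
    have hr₁pos : 0 < r₁ := by rw [hr₁]; exact mul_pos (inv_pos.2 (hn t₁)) hs1pos
    have hr₂pos : 0 < r₂ := by rw [hr₂]; exact mul_pos (inv_pos.2 (hn t₂)) hs2pos
    have hD : 0 ≤ a₁ * r₂ - a₂ * r₁ := by
      have hsin : 0 ≤ Real.sin (t₂ - t₁) :=
        Real.sin_nonneg_of_nonneg_of_le_pi (by linarith) (by linarith [ht₂.2, ht₁.1])
      have heq : a₁ * r₂ - a₂ * r₁ = ((n t₁)⁻¹ * (n t₂)⁻¹) * Real.sin (t₂ - t₁) := by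
        rw [Real.sin_sub, ha₁, hr₁, ha₂, hr₂]; ring
      rw [heq]
      have := hn t₁
      have := hn t₂
      positivity
    set D := a₁ * r₂ - a₂ * r₁ with hDdef
    have hden : 0 < r₁ + D := by linarith
    set s := r₁ / (r₁ + D) with hs
    set τ := s * r₂ / r₁ with hτ
    have hs0 : 0 ≤ s := by rw [hs]; positivity
    have hs1 : s ≤ 1 := by rw [hs, div_le_one hden]; linarith
    have hτ0 : 0 ≤ τ := by rw [hτ, hs]; positivity
    have hseq : s * (r₁ + D) = r₁ := by
      rw [hs]; field_simp
    have hτeq : τ * r₁ = s * r₂ := by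
      rw [hτ]; field_simp
    have hvcoef : (1 - s) + s * a₂ = τ * a₁ := by
      apply mul_left_cancel₀ hr₁pos.ne'
      linear_combination (-1 : ℝ) * hseq + s * hDdef + (-a₁) * hτeq
    refine petty_key hv (hγnorm t₁) (hγnorm t₂) hs0 hs1 hτ0 ?_
    rw [he₁, he₂]
    clear_value τ s D a₁ r₁ a₂ r₂
    calc (1 - s) • v + s • (a₂ • v + r₂ • w ω)
        = ((1 - s) + s * a₂) • v + (s * r₂) • w ω := by module
      _ = (τ * a₁) • v + (τ * r₁) • w ω := by rw [hvcoef, ← hτeq]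
      _ = τ • (a₁ • v + r₁ • w ω) := by module
  have hgcont : Continuous fun t => ‖γ t - v‖ := (hγcont.sub continuous_const).norm
  have hnormneg : ‖-v - v‖ = 2 := by
    rw [show -v - v = -((2:ℝ) • v) by module, norm_neg, norm_smul, hv]
    norm_num
  have hex1 : ∃ t ∈ Icc (0:ℝ) Real.pi, ‖γ t - v‖ = 1 := by
    have hIVT := intermediate_value_Icc Real.pi_pos.le hgcont.continuousOn
    have h01 : (1:ℝ) ∈ Icc ‖γ 0 - v‖ ‖γ Real.pi - v‖ := by
      rw [hγ0, hγpi, sub_self, norm_zero, hnormneg]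
      constructor <;> norm_num
    obtain ⟨t, ht, hgt⟩ := hIVT h01
    exact ⟨t, ht, hgt⟩
  set I : Set ℝ := {t : ℝ | t ∈ Icc (0:ℝ) Real.pi ∧ ‖γ t - v‖ = 1} with hIdef
  obtain ⟨t₀, ht₀, hgt₀⟩ := hex1
  have ht₀I : t₀ ∈ I := ⟨ht₀, hgt₀⟩
  have hIpre : IsPreconnected I := by
    apply Set.OrdConnected.isPreconnected
    constructor
    intro t₁ h₁ t₂ h₂ t ht
    refine ⟨⟨le_trans h₁.1.1 ht.1, le_trans ht.2 h₂.1.2⟩, le_antisymm ?_ ?_⟩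
    · calc ‖γ t - v‖ ≤ ‖γ t₂ - v‖ :=
          mono t ⟨le_trans h₁.1.1 ht.1, le_trans ht.2 h₂.1.2⟩ t₂ h₂.1 ht.2
        _ = 1 := h₂.2
    · calc (1:ℝ) = ‖γ t₁ - v‖ := h₁.2.symm
        _ ≤ ‖γ t - v‖ :=
          mono t₁ h₁.1 t ⟨le_trans h₁.1.1 ht.1, le_trans ht.2 h₂.1.2⟩ ht.1
  have hsinpos : ∀ t ∈ I, 0 < Real.sin t := by
    intro t ht
    apply Real.sin_pos_of_pos_of_lt_pi
    · rcases eq_or_lt_of_le ht.1.1 with h | h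
      · exfalso
        have := ht.2
        rw [← h, hγ0, sub_self, norm_zero] at this
        norm_num at this
      · exact h
    · rcases eq_or_lt_of_le ht.1.2 with h | h
      · exfalso
        have := ht.2
        rw [h, hγpi, hnormneg] at this
        norm_num at this
      · exact h
  have himg : {x : M | (‖x‖ = 1 ∧ ‖x - v‖ = 1) ∧ ∃ r : ℝ, 0 < r ∧ pr x = r • ω} = γ '' I := by
    ext x
    constructor
    · rintro ⟨⟨hx1, hx2⟩, r, hrpos, hxpr⟩
      obtain ⟨a, hax⟩ := hdec x
      have hxrep : x = a • v + r • w ω := by rw [hax, hxpr, map_smul]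
      set ρ := Real.sqrt (a ^ 2 + r ^ 2) with hρ
      have hρpos : 0 < ρ := Real.sqrt_pos.2 (by nlinarith [sq_nonneg a])
      have hρ2 : ρ ^ 2 = a ^ 2 + r ^ 2 := Real.sq_sqrt (by nlinarith [sq_nonneg a])
      have ha2 : a ^ 2 ≤ ρ ^ 2 := by nlinarith
      have hb1 : -1 ≤ a / ρ := by
        rw [le_div_iff₀ hρpos]
        nlinarith [sq_nonneg (a + ρ)]
      have hb2 : a / ρ ≤ 1 := by
        rw [div_le_one hρpos]
        nlinarith [sq_nonneg (a - ρ)]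
      set t := Real.arccos (a / ρ) with htdef
      have hcost : Real.cos t = a / ρ := Real.cos_arccos hb1 hb2
      have hsint : Real.sin t = r / ρ := by
        rw [htdef, Real.sin_arccos]
        have h1 : 1 - (a / ρ) ^ 2 = (r / ρ) ^ 2 := by
          field_simp
          nlinarith [hρ2]
        rw [h1, Real.sqrt_sq (by positivity)]
      have hct : Real.cos t • v + Real.sin t • w ω = ρ⁻¹ • x := by
        rw [hcost, hsint, hxrep]
        match_scalars <;> field_simp
      have hnt : n t = ρ⁻¹ := by
        rw [hndef]
        simp only []
        rw [hct, norm_smul, hx1, Real.norm_eq_abs, abs_of_pos (inv_pos.2 hρpos), mul_one]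
      have hγt : γ t = x := by
        rw [hγdef]
        simp only []
        rw [hct, hnt, smul_smul, inv_inv, mul_inv_cancel₀ hρpos.ne', one_smul]
      refine ⟨t, ⟨⟨Real.arccos_nonneg _, Real.arccos_le_pi _⟩, ?_⟩, hγt⟩
      rw [hγt]
      exact hx2
    · rintro ⟨t, htI, rfl⟩
      refine ⟨⟨hγnorm t, htI.2⟩, (n t)⁻¹ * Real.sin t, ?_, hπγ t⟩
      exact mul_pos (inv_pos.2 (hn t)) (hsinpos t htI)
  rw [himg]
  exact ⟨⟨γ t₀, mem_image_of_mem _ ht₀I⟩, hIpre.image γ hγcont.continuousOn⟩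

end PettyAux

/-- **Petty's theorem in dimension 3.** Every 3-dimensional real normed (Minkowski)
space contains four points whose pairwise distances are all equal to some `d > 0`. -/
theorem equilateral_four_points_dim_three (M : Type*)
    [NormedAddCommGroup M] [NormedSpace ℝ M] [FiniteDimensional ℝ M]
    (hdim : Module.finrank ℝ M = 3) :
    ∃ (p : Fin 4 → M) (d : ℝ), 0 < d ∧
      ∀ i j, i ≠ j → dist (p i) (p j) = d := by
  classical
  have h0 : 0 < Module.finrank ℝ M := by rw [hdim]; norm_num
  have hnt : Nontrivial M := Module.nontrivial_of_finrank_pos h0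
  obtain ⟨v₀, hv₀⟩ := exists_ne (0 : M)
  set v : M := ‖v₀‖⁻¹ • v₀ with hvdef
  have hv : ‖v‖ = 1 := norm_smul_inv_norm hv₀
  have hvne : v ≠ 0 := by
    intro h; rw [h, norm_zero] at hv; norm_num at hv
  obtain ⟨pr, w, hprv, hprw, hdec⟩ := petty_coords hdim hvne
  set C : Set M := {x : M | ‖x‖ = 1 ∧ ‖x - v‖ = 1} with hCdef
  have hT : ∀ ω : Fin 2 → ℝ, ω ≠ 0 →
      IsConnected {x : M | (‖x‖ = 1 ∧ ‖x - v‖ = 1) ∧ ∃ r : ℝ, 0 < r ∧ pr x = r • ω} :=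
    fun ω hω => petty_fiber hv pr w hprv hprw hdec hω
  have hCpr : ∀ x : M, ‖x‖ = 1 → ‖x - v‖ = 1 → pr x ≠ 0 := by
    intro x h1 h2 h0'
    obtain ⟨a, hax⟩ := hdec x
    rw [h0', map_zero, add_zero] at hax
    rw [hax, norm_smul, hv, mul_one, Real.norm_eq_abs] at h1
    rw [hax, show a • v - v = (a - 1) • v by module, norm_smul, hv, mul_one,
      Real.norm_eq_abs] at h2
    rcases (abs_eq (by norm_num : (0:ℝ) ≤ 1)).1 h1 with h | h <;>
      rcases (abs_eq (by norm_num : (0:ℝ) ≤ 1)).1 h2 with h' | h' <;> linarith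
  -- obtain the second vertex u of the equilateral triangle
  have hω₁ : (fun _ => (1:ℝ) : Fin 2 → ℝ) ≠ 0 := by
    intro h
    have := congrFun h 0
    norm_num at this
  obtain ⟨u, ⟨hu1, hu2⟩, -⟩ := (hT _ hω₁).nonempty
  -- C is compact
  have hCeq : C = sphere (0:M) 1 ∩ sphere v 1 := by
    ext x
    simp [hCdef, mem_sphere_iff_norm, sub_zero]
  have hCcomp : IsCompact C := by
    rw [hCeq]
    exact (isCompact_sphere (0:M) 1).inter_right isClosed_sphere
  -- C is preconnected
  have hCpre : IsPreconnected C := by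
    intro U V hU hV hUV hCU hCV
    by_contra hcon
    rw [Set.not_nonempty_iff_eq_empty] at hcon
    have hconm := Set.eq_empty_iff_forall_notMem.1 hcon
    have hAeq : C ∩ U = C \ V := by
      ext x
      constructor
      · rintro ⟨hx, hxu⟩
        exact ⟨hx, fun hxv => hconm x ⟨hx, hxu, hxv⟩⟩
      · rintro ⟨hx, hxnv⟩
        rcases hUV hx with h | h
        · exact ⟨hx, h⟩
        · exact absurd h hxnv
    have hBeq : C ∩ V = C \ U := by
      ext x
      constructor
      · rintro ⟨hx, hxv⟩
        exact ⟨hx, fun hxu => hconm x ⟨hx, hxu, hxv⟩⟩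
      · rintro ⟨hx, hxnu⟩
        rcases hUV hx with h | h
        · exact absurd h hxnu
        · exact ⟨hx, h⟩
    have hA : IsCompact (C ∩ U) := by rw [hAeq]; exact hCcomp.diff hV
    have hB : IsCompact (C ∩ V) := by rw [hBeq]; exact hCcomp.diff hU
    set q : M → (Fin 2 → ℝ) := fun x => ‖pr x‖⁻¹ • pr x with hqdef
    have hprc : Continuous pr := pr.continuous_of_finiteDimensional
    have hqcont : ContinuousOn q {x : M | pr x ≠ 0} :=
      ContinuousOn.smul ((hprc.norm.continuousOn).inv₀ fun x hx => norm_ne_zero_iff.2 hx)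
        hprc.continuousOn
    have hCsub : C ⊆ {x : M | pr x ≠ 0} := fun x hx => hCpr x hx.1 hx.2
    have hΘA : IsCompact (q '' (C ∩ U)) :=
      hA.image_of_continuousOn (hqcont.mono fun x hx => hCsub hx.1)
    have hΘB : IsCompact (q '' (C ∩ V)) :=
      hB.image_of_continuousOn (hqcont.mono fun x hx => hCsub hx.1)
    have hqx : ∀ x ∈ C, ‖q x‖ = 1 ∧ pr x = ‖pr x‖ • q x := by
      intro x hx
      have h0' : pr x ≠ 0 := hCpr x hx.1 hx.2
      constructor
      · rw [hqdef]
        simp only []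
        rw [norm_smul, norm_inv, norm_norm]
        exact inv_mul_cancel₀ (norm_ne_zero_iff.2 h0')
      · rw [hqdef]
        simp only []
        rw [smul_smul, mul_inv_cancel₀ (norm_ne_zero_iff.2 h0'), one_smul]
    have hdisj : ∀ ω : Fin 2 → ℝ, ω ∈ q '' (C ∩ U) → ω ∈ q '' (C ∩ V) → False := by
      rintro ω ⟨x, ⟨hxC, hxU⟩, hxq⟩ ⟨y, ⟨hyC, hyV⟩, hyq⟩
      have hωn : ‖ω‖ = 1 := by rw [← hxq]; exact (hqx x hxC).1
      have hωne : ω ≠ 0 := by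
        intro h; rw [h, norm_zero] at hωn; norm_num at hωn
      have hxT : x ∈ {z : M | (‖z‖ = 1 ∧ ‖z - v‖ = 1) ∧ ∃ r : ℝ, 0 < r ∧ pr z = r • ω} := by
        refine ⟨⟨hxC.1, hxC.2⟩, ‖pr x‖, norm_pos_iff.2 (hCpr x hxC.1 hxC.2), ?_⟩
        rw [← hxq]; exact (hqx x hxC).2
      have hyT : y ∈ {z : M | (‖z‖ = 1 ∧ ‖z - v‖ = 1) ∧ ∃ r : ℝ, 0 < r ∧ pr z = r • ω} := by
        refine ⟨⟨hyC.1, hyC.2⟩, ‖pr y‖, norm_pos_iff.2 (hCpr y hyC.1 hyC.2), ?_⟩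
        rw [← hyq]; exact (hqx y hyC).2
      obtain ⟨z, hzT, hzU, hzV⟩ := (hT ω hωne).2 U V hU hV
        (fun z hz => hUV (show z ∈ C from ⟨hz.1.1, hz.1.2⟩)) ⟨x, hxT, hxU⟩ ⟨y, hyT, hyV⟩
      exact hconm z ⟨⟨hzT.1.1, hzT.1.2⟩, hzU, hzV⟩
    have hrank : 1 < Module.rank ℝ (Fin 2 → ℝ) := by
      rw [rank_fin_fun]
      exact_mod_cast one_lt_two
    obtain ⟨hsne, hspre⟩ := isConnected_sphere hrank (0 : Fin 2 → ℝ) zero_le_one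
    have hcover : sphere (0 : Fin 2 → ℝ) 1 ⊆ q '' (C ∩ U) ∪ q '' (C ∩ V) := by
      intro ω hωs
      have hωn : ‖ω‖ = 1 := by rwa [mem_sphere_zero_iff_norm] at hωs
      have hωne : ω ≠ 0 := by
        intro h; rw [h, norm_zero] at hωn; norm_num at hωn
      obtain ⟨x, ⟨hx1, hx2⟩, r, hr, hxpr⟩ := (hT ω hωne).nonempty
      have hxC : x ∈ C := ⟨hx1, hx2⟩
      have hqxω : q x = ω := by
        rw [hqdef]
        simp only []
        rw [hxpr, norm_smul, Real.norm_eq_abs, abs_of_pos hr, hωn, mul_one, smul_smul,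
          inv_mul_cancel₀ hr.ne', one_smul]
      rcases hUV hxC with h | h
      · exact Or.inl ⟨x, ⟨hxC, h⟩, hqxω⟩
      · exact Or.inr ⟨x, ⟨hxC, h⟩, hqxω⟩
    obtain ⟨xa, hxa⟩ := hCU
    obtain ⟨xb, hxb⟩ := hCV
    have hfin := hspre (q '' (C ∩ V))ᶜ (q '' (C ∩ U))ᶜ
      hΘB.isClosed.isOpen_compl hΘA.isClosed.isOpen_compl
      (fun ω hωs => by
        by_cases hmem : ω ∈ q '' (C ∩ U)
        · exact Or.inl fun hmem' => hdisj ω hmem hmem'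
        · rcases hcover hωs with h | h
          · exact absurd h hmem
          · exact Or.inr hmem)
      ⟨q xa, by rw [mem_sphere_zero_iff_norm]; exact (hqx xa hxa.1).1,
        fun hmem => hdisj (q xa) ⟨xa, hxa, rfl⟩ hmem⟩
      ⟨q xb, by rw [mem_sphere_zero_iff_norm]; exact (hqx xb hxb.1).1,
        fun hmem => hdisj (q xb) hmem ⟨xb, hxb, rfl⟩⟩
    obtain ⟨ω, hωs, hω1, hω2⟩ := hfin
    rcases hcover hωs with h | h
    · exact hω2 h
    · exact hω1 h
  -- the final intermediate value argument on C
  have huC : u ∈ C := ⟨hu1, hu2⟩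
  have hvuC : v - u ∈ C := by
    constructor
    · rw [norm_sub_rev]; exact hu2
    · rw [show v - u - v = -u by module, norm_neg]; exact hu1
  have hcont : ContinuousOn (fun x : M => ‖x - u‖) C :=
    ((continuous_id.sub continuous_const).norm).continuousOn
  have hIVT := hCpre.intermediate_value huC hvuC hcont
  have h1mem : (1:ℝ) ∈ Icc ‖u - u‖ ‖v - u - u‖ := by
    constructor
    · rw [sub_self, norm_zero]; norm_num
    · have h2u : ‖u + u‖ = 2 := by
        rw [show u + u = (2:ℝ) • u by module, norm_smul, hu1]
        norm_num
      have h3 := norm_sub_norm_le (u + u) v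
      have hrw : ‖v - u - u‖ = ‖u + u - v‖ := by
        rw [← norm_neg (v - u - u), show -(v - u - u) = u + u - v by module]
      rw [hrw]
      rw [h2u, hv] at h3
      linarith
  obtain ⟨z, hzC, hz⟩ := hIVT h1mem
  refine ⟨![0, v, u, z], 1, one_pos, ?_⟩
  have d1 : dist (0:M) v = 1 := by rw [dist_eq_norm, zero_sub, norm_neg, hv]
  have d2 : dist (0:M) u = 1 := by rw [dist_eq_norm, zero_sub, norm_neg, hu1]
  have d3 : dist (0:M) z = 1 := by rw [dist_eq_norm, zero_sub, norm_neg, hzC.1]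
  have d4 : dist v u = 1 := by rw [dist_eq_norm, norm_sub_rev, hu2]
  have d5 : dist v z = 1 := by rw [dist_eq_norm, norm_sub_rev, hzC.2]
  have d6 : dist u z = 1 := by rw [dist_eq_norm, norm_sub_rev]; exact hz
  intro i j hij
  fin_cases i <;> fin_cases j <;>
    simp_all [dist_comm, Matrix.cons_val_zero, Matrix.cons_val_one]
end
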